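/- arXiv:1912.00593 — 2 statements merged into one kernel-verified Lean document; each statement's English description precedes it below -/
import Mathlib

section
/- Let v ∈ ℂ^n, u ∈ ℤ^n, and b ∈ ℂ^n with b_j ≠ 0 for every j. Then, as an equation of integers, ord_s([v+sb]_{u₋}) − ord_s([v+u+sb]_{u₊}) = |nsupp(v+u)| − |nsupp(v)|; that is, the rational function a_u(s) = [v+sb]_{u₋} / [v+u+sb]_{u₊} has order |nsupp(v+u)| − |nsupp(v)| at s = 0. (Corollary 5.3, order statement.) -/
open scoped Classical

/-- The negative support of `v`: indices where `v i` is a negative integer. -/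
noncomputable def nsupp {n : ℕ} (v : Fin n → ℂ) : Finset (Fin n) :=
  Finset.univ.filter (fun i => ∃ m : ℤ, m < 0 ∧ v i = (m : ℂ))

/-- The falling factorial `[v]_u = ∏_i ∏_{k=0}^{u_i - 1} (v_i - k)`. -/
noncomputable def ffall {n : ℕ} (v : Fin n → ℂ) (u : Fin n → ℕ) : ℂ :=
  ∏ i, ∏ k ∈ Finset.range (u i), (v i - (k : ℂ))

/-- The reduced falling factorial: the product of the nonzero factors of `[v]_u`. -/
noncomputable def redffall {n : ℕ} (v : Fin n → ℂ) (u : Fin n → ℕ) : ℂ :=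
  ∏ i, ∏ k ∈ (Finset.range (u i)).filter (fun k : ℕ => v i - (k : ℂ) ≠ 0), (v i - (k : ℂ))

/-- The polynomial `[v + s b]_u = ∏_i ∏_{k=0}^{u_i - 1} (v_i - k + s b_i)` in `ℂ[s]`. -/
noncomputable def pertFF {n : ℕ} (v b : Fin n → ℂ) (u : Fin n → ℕ) : Polynomial ℂ :=
  ∏ i, ∏ k ∈ Finset.range (u i),
    (Polynomial.C (v i - (k : ℂ)) + Polynomial.C (b i) * Polynomial.X)

lemma linfac_ne_zero (c b : ℂ) (hb : b ≠ 0) :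
    Polynomial.C c + Polynomial.C b * Polynomial.X ≠ 0 := by
  intro h
  have := congrArg (Polynomial.coeff · 1) h
  simp at this
  exact hb this

lemma linfac_ntd (c b : ℂ) (hb : b ≠ 0) :
    (Polynomial.C c + Polynomial.C b * Polynomial.X).natTrailingDegree
      = if c = 0 then 1 else 0 := by
  split_ifs with hc
  · subst hc
    simp [Polynomial.natTrailingDegree_mul (Polynomial.C_ne_zero.mpr hb) Polynomial.X_ne_zero]
  · apply Polynomial.natTrailingDegree_eq_zero_of_constantCoeff_ne_zero
    simp [Polynomial.constantCoeff_apply, hc]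

lemma ntd_prod {ι : Type*} (s : Finset ι) (f : ι → Polynomial ℂ)
    (hf : ∀ i ∈ s, f i ≠ 0) :
    (∏ i ∈ s, f i).natTrailingDegree = ∑ i ∈ s, (f i).natTrailingDegree := by
  induction s using Finset.cons_induction with
  | empty => simp
  | cons a s ha ih =>
    rw [Finset.prod_cons, Finset.sum_cons,
      Polynomial.natTrailingDegree_mul (hf a (Finset.mem_cons_self a s))
        (Finset.prod_ne_zero_iff.mpr fun i hi => hf i (Finset.mem_cons_of_mem hi)),
      ih fun i hi => hf i (Finset.mem_cons_of_mem hi)]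

lemma ntd_pertFF {n : ℕ} (v b : Fin n → ℂ) (u : Fin n → ℕ) (hb : ∀ j, b j ≠ 0) :
    (pertFF v b u).natTrailingDegree
      = ∑ i, ∑ k ∈ Finset.range (u i), if v i - (k : ℂ) = 0 then 1 else 0 := by
  unfold pertFF
  rw [ntd_prod]
  · apply Finset.sum_congr rfl
    intro i _
    rw [ntd_prod]
    · exact Finset.sum_congr rfl fun k _ => linfac_ntd _ _ (hb i)
    · exact fun k _ => linfac_ne_zero _ _ (hb i)
  · intro i _
    exact Finset.prod_ne_zero_iff.mpr fun k _ => linfac_ne_zero _ _ (hb i)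

lemma sum_indicator (N : ℕ) (m : ℤ) :
    (∑ k ∈ Finset.range N, if (m : ℂ) - (k : ℂ) = 0 then 1 else 0)
      = if 0 ≤ m ∧ m < N then 1 else 0 := by
  have key : ∀ k : ℕ, ((m : ℂ) - (k : ℂ) = 0) ↔ m = (k : ℤ) := by
    intro k
    rw [sub_eq_zero]
    norm_cast
  simp_rw [key]
  split_ifs with h
  · have h2 : ∀ x : ℕ, (m = (x : ℤ)) = (x = m.toNat) := fun x => propext (by omega)
    simp_rw [h2]
    rw [Finset.sum_ite_eq' (Finset.range N) m.toNat (fun _ => 1)]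
    simp only [Finset.mem_range]
    rw [if_pos (by omega)]
  · apply Finset.sum_eq_zero
    intro x hx
    rw [Finset.mem_range] at hx
    rw [if_neg (by omega)]

lemma nsupp_card {n : ℕ} (v : Fin n → ℂ) :
    (nsupp v).card = ∑ i, if ∃ m : ℤ, m < 0 ∧ v i = (m : ℂ) then 1 else 0 := by
  rw [nsupp, Finset.card_filter]

/-- Corollary 5.3, order statement: if `b_j ≠ 0` for all `j`, then
`ord_s([v+sb]_{u₋}) − ord_s([v+u+sb]_{u₊}) = |nsupp(v+u)| − |nsupp(v)|` as integers. -/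
theorem ord_coeff_ratio {n : ℕ} (hn : 0 < n) (v b : Fin n → ℂ) (u : Fin n → ℤ)
    (hb : ∀ j, b j ≠ 0) :
    ((pertFF v b (fun i => (-(u i)).toNat)).natTrailingDegree : ℤ) -
      ((pertFF (fun i => v i + ((u i : ℤ) : ℂ)) b (fun i => (u i).toNat)).natTrailingDegree : ℤ)
    = ((nsupp (fun i => v i + ((u i : ℤ) : ℂ))).card : ℤ) - ((nsupp v).card : ℤ) := by
  rw [ntd_pertFF _ _ _ hb, ntd_pertFF _ _ _ hb, nsupp_card, nsupp_card]
  push_cast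
  rw [← Finset.sum_sub_distrib, ← Finset.sum_sub_distrib]
  apply Finset.sum_congr rfl
  intro i _
  by_cases hint : ∃ m : ℤ, v i = (m : ℂ)
  · obtain ⟨m, hm⟩ := hint
    have hvu : v i + ((u i : ℤ) : ℂ) = ((m + u i : ℤ) : ℂ) := by push_cast [hm]; ring
    rw [hvu, hm]
    have e1 := sum_indicator ((-(u i)).toNat) m
    have e2 := sum_indicator ((u i).toNat) (m + u i)
    -- convert ℕ-valued sums to ℤ-valued (after push_cast the sums are over ℤ)
    have c1 : (∑ k ∈ Finset.range ((-(u i)).toNat),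
        if (m : ℂ) - (k : ℂ) = 0 then (1 : ℤ) else 0)
        = if 0 ≤ m ∧ m < ((-(u i)).toNat : ℤ) then 1 else 0 := by
      exact_mod_cast congrArg (Nat.cast : ℕ → ℤ) e1
    have c2 : (∑ k ∈ Finset.range ((u i).toNat),
        if ((m + u i : ℤ) : ℂ) - (k : ℂ) = 0 then (1 : ℤ) else 0)
        = if 0 ≤ m + u i ∧ m + u i < ((u i).toNat : ℤ) then 1 else 0 := by
      exact_mod_cast congrArg (Nat.cast : ℕ → ℤ) e2
    rw [c1, c2]
    have hne : ∀ p : ℤ, (∃ m' : ℤ, m' < 0 ∧ ((p : ℤ) : ℂ) = (m' : ℂ)) ↔ p < 0 := by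
      intro p
      constructor
      · rintro ⟨m', hm', he⟩
        have : p = m' := by exact_mod_cast he
        omega
      · intro hp; exact ⟨p, hp, rfl⟩
    simp only [hne]
    split_ifs <;> omega
  · have hnot : ∀ (c : ℂ), (∀ m' : ℤ, c ≠ (m' : ℂ)) →
        ∀ N : ℕ, (∑ k ∈ Finset.range N, if c - (k : ℂ) = 0 then (1 : ℤ) else 0) = 0 := by
      intro c hc N
      apply Finset.sum_eq_zero
      intro k _
      rw [if_neg]
      intro h
      exact hc k (by rw [sub_eq_zero] at h; exact_mod_cast h)
    have h1 : ∀ m' : ℤ, v i ≠ (m' : ℂ) := fun m' h => hint ⟨m', h⟩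
    have h2 : ∀ m' : ℤ, v i + ((u i : ℤ) : ℂ) ≠ (m' : ℂ) := by
      intro m' h
      exact hint ⟨m' - u i, by push_cast; linear_combination h⟩
    rw [hnot _ h1, hnot _ h2]
    rw [if_neg, if_neg]
    · rintro ⟨m', _, hm'⟩; exact h1 m' hm'
    · rintro ⟨m', _, hm'⟩; exact h2 m' hm'
end

section
/- Let v ∈ ℂ^n, let b^{(1)}, …, b^{(l)} ∈ ℂ^n, and let u, u' ∈ ℤ^n. Set I₀ = nsupp(v), I = nsupp(v+u), J = nsupp(v+u−u'), ℓ_i = Σ_{j=1}^l b_i^{(j)} s_j, and define Q₋ = ∏_{i=1}^n ∏_{k=0}^{(u₋)_i−1} (v_i − k + ℓ_i) and Q'₊ = ∏_{i=1}^n ∏_{k=0}^{(u'₊)_i−1} (v_i + u_i − k + ℓ_i) in ℂ[s₁,…,s_l]. Then the sets I\I₀ and J\I are disjoint; every homogeneous component of the product Q₋ · Q'₊ of total degree < |I\I₀| + |J\I| is zero; and its homogeneous component of degree |I\I₀| + |J\I| equals [v]^_{u₋} · [v+u]^_{u'₊} · ∏_{i ∈ (I\I₀) ∪ (J\I)} ℓ_i.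 (This is the computation establishing display (13) in the proof of Theorem 6.2.) -/
open scoped Classical

/-- The linear form `ℓ_i = Σ_j b_i^{(j)} s_j` in `ℂ[s₁,…,s_l]`. -/
noncomputable def ell {n l : ℕ} (b : Fin l → Fin n → ℂ) (i : Fin n) :
    MvPolynomial (Fin l) ℂ :=
  ∑ j, MvPolynomial.C (b j i) * MvPolynomial.X j

/-- The multivariate perturbed falling factorial
`∏_i ∏_{k=0}^{u_i−1} (v_i − k + ℓ_i)` in `ℂ[s₁,…,s_l]`. -/
noncomputable def pertFFmv {n l : ℕ} (v : Fin n → ℂ) (b : Fin l → Fin n → ℂ)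
    (u : Fin n → ℕ) : MvPolynomial (Fin l) ℂ :=
  ∏ i, ∏ k ∈ Finset.range (u i), (MvPolynomial.C (v i - (k : ℂ)) + ell b i)

section Aux

open MvPolynomial Finset

lemma ell_isHomogeneous {n l : ℕ} (b : Fin l → Fin n → ℂ) (i : Fin n) :
    (ell b i).IsHomogeneous 1 := by
  apply MvPolynomial.IsHomogeneous.sum
  intro j _
  simpa using (isHomogeneous_C (Fin l) (b j i)).mul (isHomogeneous_X ℂ j)

lemma ell_constantCoeff {n l : ℕ} (b : Fin l → Fin n → ℂ) (i : Fin n) :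
    MvPolynomial.constantCoeff (ell b i) = 0 := by
  simp [ell]

lemma key_mul {σ : Type*} (H R : MvPolynomial σ ℂ) (d : ℕ) (hH : H.IsHomogeneous d)
    (m : ℕ) (hm : m ≤ d) :
    MvPolynomial.homogeneousComponent m (H * R) =
      if m = d then H * MvPolynomial.C (MvPolynomial.constantCoeff R) else 0 := by
  conv_lhs => rw [← sum_homogeneousComponent R, Finset.mul_sum, map_sum]
  have hterm : ∀ k, homogeneousComponent m (H * homogeneousComponent k R)
      = if m = d + k then H * homogeneousComponent k R else 0 := by
    intro k
    exact homogeneousComponent_of_mem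
      ((mem_homogeneousSubmodule _ _).2 (hH.mul (homogeneousComponent_isHomogeneous k R)))
  simp only [hterm]
  rcases eq_or_lt_of_le hm with rfl | hlt
  · rw [Finset.sum_eq_single 0]
    · simp [MvPolynomial.homogeneousComponent_zero, MvPolynomial.constantCoeff_eq]
    · intro k _ hk0; rw [if_neg]; omega
    · intro h; simp at h
  · rw [if_neg (by omega)]
    apply Finset.sum_eq_zero
    intro k _
    rw [if_neg (by omega)]

lemma prod_lowest {σ ι : Type*} (S : Finset ι) (c : ι → ℂ) (L : ι → MvPolynomial σ ℂ)
    (hL : ∀ f ∈ S, (L f).IsHomogeneous 1) (hL0 : ∀ f ∈ S, MvPolynomial.constantCoeff (L f) = 0)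
    (m : ℕ) (hm : m ≤ (S.filter (fun f => c f = 0)).card) :
    MvPolynomial.homogeneousComponent m (∏ f ∈ S, (MvPolynomial.C (c f) + L f)) =
      if m = (S.filter (fun f => c f = 0)).card then
        MvPolynomial.C (∏ f ∈ S.filter (fun f => ¬ c f = 0), c f) *
          ∏ f ∈ S.filter (fun f => c f = 0), L f
      else 0 := by
  have hsplit : ∏ f ∈ S, (MvPolynomial.C (c f) + L f)
      = (∏ f ∈ S.filter (fun f => c f = 0), L f) *
        ∏ f ∈ S.filter (fun f => ¬ c f = 0), (MvPolynomial.C (c f) + L f) := by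
    rw [← Finset.prod_filter_mul_prod_filter_not S (fun f => c f = 0)]
    congr 1
    refine Finset.prod_congr rfl fun f hf => ?_
    rw [(Finset.mem_filter.mp hf).2, map_zero, zero_add]
  have hH : (∏ f ∈ S.filter (fun f => c f = 0), L f).IsHomogeneous
      ((S.filter (fun f => c f = 0)).card) := by
    have := MvPolynomial.IsHomogeneous.prod (S.filter (fun f => c f = 0)) L (fun _ => 1)
      (fun f hf => hL f (Finset.mem_filter.mp hf).1)
    simpa using this
  rw [hsplit, key_mul _ _ _ hH m hm]
  have hcc : MvPolynomial.constantCoeff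
      (∏ f ∈ S.filter (fun f => ¬ c f = 0), (MvPolynomial.C (c f) + L f))
      = ∏ f ∈ S.filter (fun f => ¬ c f = 0), c f := by
    rw [map_prod]
    refine Finset.prod_congr rfl fun f hf => ?_
    simp [hL0 f (Finset.mem_filter.mp hf).1]
  rw [hcc, mul_comm]

lemma filter_card_aux (x : ℂ) (t : ℤ) :
    ((Finset.range t.toNat).filter (fun k : ℕ => x - (k : ℂ) = 0)).card =
      if (∃ m : ℤ, m < 0 ∧ x - (t : ℂ) = (m : ℂ)) ∧ ¬(∃ m : ℤ, m < 0 ∧ x = (m : ℂ))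
      then 1 else 0 := by
  split_ifs with h
  · obtain ⟨⟨m, hm, hx⟩, hneg⟩ := h
    have hx' : x = ((m + t : ℤ) : ℂ) := by push_cast; linear_combination hx
    have hnn : 0 ≤ m + t := by
      by_contra hc
      exact hneg ⟨m + t, by omega, hx'⟩
    have : (Finset.range t.toNat).filter (fun k : ℕ => x - (k : ℂ) = 0) = {(m + t).toNat} := by
      ext k
      simp only [Finset.mem_filter, Finset.mem_range, Finset.mem_singleton]
      constructor
      · rintro ⟨hk, hk0⟩
        have : ((m + t : ℤ) : ℂ) = ((k : ℤ) : ℂ) := by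
          push_cast; push_cast at hx'; linear_combination hk0 - hx'
        have hkm : (k : ℤ) = m + t := (Int.cast_injective this).symm
        omega
      · rintro rfl
        have hkz : (((m + t).toNat : ℤ) : ℂ) = ((m + t : ℤ) : ℂ) := by
          rw [Int.toNat_of_nonneg hnn]
        constructor
        · omega
        · rw [hx']
          push_cast at hkz ⊢
          linear_combination -hkz
    rw [this, Finset.card_singleton]
  · rw [Finset.card_eq_zero, Finset.filter_eq_empty_iff]
    intro k hk
    rw [Finset.mem_range] at hk
    intro hk0
    have hxk : x = ((k : ℤ) : ℂ) := by push_cast; linear_combination hk0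
    apply h
    have hklt : (k : ℤ) < t := by omega
    constructor
    · exact ⟨(k : ℤ) - t, by omega, by rw [hxk]; push_cast; ring⟩
    · rintro ⟨m, hm, hxm⟩
      have : ((m : ℤ) : ℂ) = ((k : ℤ) : ℂ) := by rw [← hxm, hxk]
      have := Int.cast_injective this
      omega

lemma filter_sigma' {α : Type*} {β : α → Type*} (s : Finset α) (t : ∀ a, Finset (β a))
    (p : (Σ a, β a) → Prop) [DecidablePred p] :
    (s.sigma t).filter p = s.sigma (fun a => (t a).filter (fun b => p ⟨a, b⟩)) := by
  ext ⟨a, b⟩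
  simp [Finset.mem_sigma, Finset.mem_filter, and_assoc]

lemma filter_disjSum' {α β : Type*} (s : Finset α) (t : Finset β) (p : α ⊕ β → Prop)
    [DecidablePred p] :
    (s.disjSum t).filter p =
      (s.filter (fun a => p (Sum.inl a))).disjSum (t.filter (fun b => p (Sum.inr b))) := by
  ext x
  cases x <;> simp

end Aux

/-- the computation establishing display (13) in the proof of Theorem 6.2:
with `I₀ = nsupp(v)`, `I = nsupp(v+u)`, `J = nsupp(v+u−u')`, the sets `I\I₀` and `J\I`
are disjoint; every homogeneous component of `Q₋ · Q'₊` of total degree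
`< |I\I₀| + |J\I|` vanishes; and the component of degree `|I\I₀| + |J\I|` equals
`[v]^_{u₋} · [v+u]^_{u'₊} · ∏_{i ∈ (I\I₀) ∪ (J\I)} ℓ_i`. -/
theorem pertFFmv_critical_term_lowest_component {n l : ℕ} (hn : 0 < n) (hl : 0 < l)
    (v : Fin n → ℂ) (b : Fin l → Fin n → ℂ) (u u' : Fin n → ℤ)
    (I₀ I J : Finset (Fin n)) (hI₀ : I₀ = nsupp v)
    (hI : I = nsupp (fun i => v i + ((u i : ℤ) : ℂ)))
    (hJ : J = nsupp (fun i => v i + ((u i - u' i : ℤ) : ℂ))) :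
    Disjoint (I \ I₀) (J \ I) ∧
    (∀ m < (I \ I₀).card + (J \ I).card,
      MvPolynomial.homogeneousComponent m
        (pertFFmv v b (fun i => (-(u i)).toNat) *
          pertFFmv (fun i => v i + ((u i : ℤ) : ℂ)) b (fun i => (u' i).toNat)) = 0) ∧
    MvPolynomial.homogeneousComponent ((I \ I₀).card + (J \ I).card)
        (pertFFmv v b (fun i => (-(u i)).toNat) *
          pertFFmv (fun i => v i + ((u i : ℤ) : ℂ)) b (fun i => (u' i).toNat)) =
      MvPolynomial.C
          (redffall v (fun i => (-(u i)).toNat) *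
            redffall (fun i => v i + ((u i : ℤ) : ℂ)) (fun i => (u' i).toNat)) *
        ∏ i ∈ (I \ I₀) ∪ (J \ I), ell b i := by
  classical
  have hdisj : Disjoint (I \ I₀) (J \ I) := by
    rw [Finset.disjoint_left]
    intro a ha hb
    exact (Finset.mem_sdiff.mp hb).2 (Finset.mem_sdiff.mp ha).1
  -- per-index counting facts
  have hc1 : ∀ i : Fin n,
      ((Finset.range ((-(u i)).toNat)).filter (fun k : ℕ => v i - (k : ℂ) = 0)).card
        = if i ∈ I \ I₀ then 1 else 0 := by
    intro i
    rw [filter_card_aux (v i) (-(u i))]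
    refine if_congr ?_ rfl rfl
    have e : v i - ((-(u i) : ℤ) : ℂ) = v i + ((u i : ℤ) : ℂ) := by push_cast; ring
    rw [e, hI, hI₀]
    simp only [Finset.mem_sdiff, nsupp, Finset.mem_filter, Finset.mem_univ, true_and]
  have hc2 : ∀ i : Fin n,
      ((Finset.range ((u' i).toNat)).filter
          (fun k : ℕ => (v i + ((u i : ℤ) : ℂ)) - (k : ℂ) = 0)).card
        = if i ∈ J \ I then 1 else 0 := by
    intro i
    rw [filter_card_aux (v i + ((u i : ℤ) : ℂ)) (u' i)]
    refine if_congr ?_ rfl rfl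
    have e : (v i + ((u i : ℤ) : ℂ)) - ((u' i : ℤ) : ℂ) = v i + ((u i - u' i : ℤ) : ℂ) := by
      push_cast; ring
    rw [e, hJ, hI]
    simp only [Finset.mem_sdiff, nsupp, Finset.mem_filter, Finset.mem_univ, true_and]
  -- the big product over a disjoint sum of sigma types
  set S : Finset (((i : Fin n) × ℕ) ⊕ ((i : Fin n) × ℕ)) :=
    (Finset.univ.sigma (fun i : Fin n => Finset.range ((-(u i)).toNat))).disjSum
      (Finset.univ.sigma (fun i : Fin n => Finset.range ((u' i).toNat))) with hS
  set c : (((i : Fin n) × ℕ) ⊕ ((i : Fin n) × ℕ)) → ℂ :=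
    Sum.elim (fun p => v p.1 - (p.2 : ℂ)) (fun p => (v p.1 + ((u p.1 : ℤ) : ℂ)) - (p.2 : ℂ))
    with hc
  set L : (((i : Fin n) × ℕ) ⊕ ((i : Fin n) × ℕ)) → MvPolynomial (Fin l) ℂ :=
    Sum.elim (fun p => ell b p.1) (fun p => ell b p.1) with hL
  have hprod : ∏ f ∈ S, (MvPolynomial.C (c f) + L f) =
      pertFFmv v b (fun i => (-(u i)).toNat) *
        pertFFmv (fun i => v i + ((u i : ℤ) : ℂ)) b (fun i => (u' i).toNat) := by
    rw [hS, Finset.prod_disjSum, Finset.prod_sigma, Finset.prod_sigma]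
    rfl
  have hLhom : ∀ f ∈ S, (L f).IsHomogeneous 1 := by
    rintro (p | p) _ <;> exact ell_isHomogeneous b p.1
  have hLcc : ∀ f ∈ S, MvPolynomial.constantCoeff (L f) = 0 := by
    rintro (p | p) _ <;> exact ell_constantCoeff b p.1
  have hsum : ∀ A : Finset (Fin n), (∑ i : Fin n, if i ∈ A then 1 else 0) = A.card := by
    intro A
    rw [Finset.sum_ite_mem, Finset.univ_inter]
    simp
  have hZcard : (S.filter (fun f => c f = 0)).card = (I \ I₀).card + (J \ I).card := by
    rw [hS, filter_disjSum', Finset.card_disjSum, filter_sigma', filter_sigma',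
      Finset.card_sigma, Finset.card_sigma]
    simp only [hc, Sum.elim_inl, Sum.elim_inr]
    rw [Finset.sum_congr rfl (fun i _ => hc1 i), Finset.sum_congr rfl (fun i _ => hc2 i),
      hsum, hsum]
  have hprodA : ∀ (A : Finset (Fin n)) (F : Fin n → Finset ℕ),
      (∀ i, (F i).card = if i ∈ A then 1 else 0) →
      (∏ i : Fin n, ∏ _k ∈ F i, ell b i) = ∏ i ∈ A, ell b i := by
    intro A F hF
    calc (∏ i : Fin n, ∏ _k ∈ F i, ell b i) = ∏ i : Fin n, (ell b i) ^ (F i).card := by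
          simp [Finset.prod_const]
      _ = ∏ i : Fin n, if i ∈ A then ell b i else 1 := by
          refine Finset.prod_congr rfl fun i _ => ?_
          rw [hF i]
          split_ifs <;> simp
      _ = ∏ i ∈ A, ell b i := by rw [Finset.prod_ite_mem, Finset.univ_inter]
  have hprodz : ∏ f ∈ S.filter (fun f => c f = 0), L f = ∏ i ∈ (I \ I₀) ∪ (J \ I), ell b i := by
    rw [hS, filter_disjSum', Finset.prod_disjSum, filter_sigma', filter_sigma',
      Finset.prod_sigma, Finset.prod_sigma]
    simp only [hc, hL, Sum.elim_inl, Sum.elim_inr]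
    rw [hprodA _ _ hc1, hprodA _ _ hc2, Finset.prod_union hdisj]
  have hprodnz : ∏ f ∈ S.filter (fun f => ¬ c f = 0), c f =
      redffall v (fun i => (-(u i)).toNat) *
        redffall (fun i => v i + ((u i : ℤ) : ℂ)) (fun i => (u' i).toNat) := by
    rw [hS, filter_disjSum', Finset.prod_disjSum, filter_sigma', filter_sigma',
      Finset.prod_sigma, Finset.prod_sigma]
    rfl
  have hkey : ∀ m ≤ (I \ I₀).card + (J \ I).card,
      MvPolynomial.homogeneousComponent m
        (pertFFmv v b (fun i => (-(u i)).toNat) *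
          pertFFmv (fun i => v i + ((u i : ℤ) : ℂ)) b (fun i => (u' i).toNat)) =
      if m = (I \ I₀).card + (J \ I).card then
        MvPolynomial.C
            (redffall v (fun i => (-(u i)).toNat) *
              redffall (fun i => v i + ((u i : ℤ) : ℂ)) (fun i => (u' i).toNat)) *
          ∏ i ∈ (I \ I₀) ∪ (J \ I), ell b i
      else 0 := by
    intro m hm
    rw [← hprod, prod_lowest S c L hLhom hLcc m (by rw [hZcard]; exact hm), hZcard,
      hprodnz, hprodz]
  refine ⟨hdisj, fun m hm => ?_, ?_⟩
  · rw [hkey m (le_of_lt hm), if_neg (Nat.ne_of_lt hm)]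
  · rw [hkey _ le_rfl, if_pos rfl]
end
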